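/- For every ρ ≥ 0 and every tuple u = (u_1,…,u_S) ∈ (ℝ^N)^S, one has Σ_{s=1}^S (1/S)‖Au_s‖₂² + ρ Σ_{s=1}^S ‖u_s − u_{(s mod S)+1}‖₂² ≤ ( ‖A‖²/S + αρ ) · Σ_{s=1}^S ‖u_s‖₂², where α = 4 if S is even and α = 2 − 2cos(π(S−1)/S) if S is odd; i.e., for the cyclic nearest-neighbor coupling the corresponding block operator B has spectral norm at most (‖A‖²/S + αρ)^{1/2}. -/

import Mathlib

open Finset

/-- Sum of powers of a primitive root of unity over a full period. -/
lemma rootsum_aux (S : ℕ) (hS : 2 ≤ S) (d : ℤ) :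
    ∑ k : Fin S, (Complex.exp (2 * Real.pi * Complex.I / S)) ^ ((k : ℤ) * d)
      = if (S:ℤ) ∣ d then (S:ℂ) else 0 := by
  have hS0 : (S:ℂ) ≠ 0 := by exact_mod_cast (by omega : S ≠ 0)
  set ω : ℂ := Complex.exp (2 * Real.pi * Complex.I / S) with hω
  have hωz : ∀ n : ℤ, ω ^ n = Complex.exp (n * (2 * Real.pi * Complex.I / S)) := by
    intro n
    rw [hω, ← Complex.exp_int_mul]
  have hωS : ω ^ (S:ℤ) = 1 := by
    rw [hωz]
    rw [show ((S:ℤ) : ℂ) * (2 * Real.pi * Complex.I / S) = 2 * Real.pi * Complex.I by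
      push_cast; field_simp]
    exact Complex.exp_two_pi_mul_I
  have hdvd : ∀ n : ℤ, ω ^ n = 1 ↔ (S:ℤ) ∣ n := by
    intro n
    rw [hωz, Complex.exp_eq_one_iff]
    constructor
    · rintro ⟨m, hm⟩
      refine ⟨m, ?_⟩
      have hπ : (2 * Real.pi * Complex.I : ℂ) ≠ 0 := by
        simp [Real.pi_ne_zero, Complex.I_ne_zero]
      field_simp at hm
      have h2 : ((n : ℂ) - S * m) * (2 * Real.pi * Complex.I) = 0 := by
        linear_combination (2 * Real.pi * Complex.I) * hm
      rcases mul_eq_zero.1 h2 with h3 | h3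
      · exact_mod_cast sub_eq_zero.1 h3
      · exact absurd h3 hπ
    · rintro ⟨m, rfl⟩
      exact ⟨m, by field_simp; norm_cast⟩
  by_cases h : (S:ℤ) ∣ d
  · simp only [h, if_true]
    have : ∀ k : Fin S, ω ^ ((k:ℤ) * d) = 1 := by
      intro k
      rw [(hdvd _).2 (Dvd.dvd.mul_left h _)]
    simp [this]
  · simp only [h, if_false]
    have hz : ω ^ d ≠ 1 := fun hh => h ((hdvd d).1 hh)
    have hzS : (ω ^ d) ^ S = 1 := by
      rw [← zpow_natCast, ← zpow_mul, mul_comm, zpow_mul, hωS, one_zpow]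
    calc ∑ k : Fin S, ω ^ ((k:ℤ) * d) = ∑ k : Fin S, (ω ^ d) ^ (k : ℕ) := by
          refine Finset.sum_congr rfl fun k _ => ?_
          rw [← zpow_natCast (ω ^ d), ← zpow_mul, mul_comm]
      _ = ∑ k ∈ Finset.range S, (ω ^ d) ^ k := Fin.sum_univ_eq_sum_range _ _
      _ = 0 := by
          rw [geom_sum_eq hz, hzS]
          simp

/-- Trigonometric nonnegativity used for the odd-cycle spectral bound. -/
lemma trig_aux (S v : ℕ) (hS : 2 ≤ S) (hodd : S % 2 = 1) (hv : v < S) :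
    0 ≤ Real.cos (Real.pi/S) + Real.cos (2*Real.pi*v/S) := by
  have hπ := Real.pi_pos
  have hS0 : (0:ℝ) < S := by positivity
  have hvS : (v:ℝ) + 1 ≤ S := by exact_mod_cast hv
  have ub : ∀ r : ℝ, r ≤ S → Real.pi * r / (2*S) ≤ Real.pi/2 := by
    intro r hr
    rw [div_le_iff₀ (by positivity)]
    nlinarith
  have lb : ∀ r : ℝ, -S ≤ r → -(Real.pi/2) ≤ Real.pi * r/(2*S) := by
    intro r hr
    have h2 := ub (-r) (by linarith)
    rw [neg_le]
    calc -(Real.pi*r/(2*S)) = Real.pi*(-r)/(2*S) := by ring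
      _ ≤ Real.pi/2 := h2
  have lb2 : ∀ r : ℝ, (S:ℝ) ≤ r → Real.pi/2 ≤ Real.pi*r/(2*S) := by
    intro r hr
    rw [le_div_iff₀ (by positivity)]
    nlinarith
  have ub2 : ∀ r : ℝ, r ≤ 3*S → Real.pi*r/(2*S) ≤ Real.pi + Real.pi/2 := by
    intro r hr
    rw [div_le_iff₀ (by positivity)]
    nlinarith
  rw [Real.cos_add_cos]
  have e1 : (Real.pi/S + 2*Real.pi*v/S)/2 = Real.pi * (2*v+1)/(2*S) := by
    field_simp; ring
  have e2 : (Real.pi/S - 2*Real.pi*v/S)/2 = -(Real.pi * (2*v-1)/(2*S)) := by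
    field_simp; ring
  rw [e1, e2, Real.cos_neg]
  rcases lt_or_ge (2*v) S with h | h
  · have hc1 : (2*(v:ℝ)+1) ≤ S := by
      have : 2*v+1 ≤ S := by omega
      exact_mod_cast this
    have h1 : 0 ≤ Real.cos (Real.pi * (2*v+1)/(2*S)) :=
      Real.cos_nonneg_of_mem_Icc ⟨lb _ (by linarith), ub _ (by linarith)⟩
    have h2 : 0 ≤ Real.cos (Real.pi * (2*v-1)/(2*S)) :=
      Real.cos_nonneg_of_mem_Icc ⟨lb _ (by linarith), ub _ (by linarith)⟩
    positivity
  · have hgt : S + 1 ≤ 2*v := by omega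
    have hc1 : (S:ℝ) + 1 ≤ 2*v := by exact_mod_cast hgt
    have h1 : Real.cos (Real.pi * (2*v+1)/(2*S)) ≤ 0 :=
      Real.cos_nonpos_of_pi_div_two_le_of_le (lb2 _ (by linarith)) (ub2 _ (by linarith))
    have h2 : Real.cos (Real.pi * (2*v-1)/(2*S)) ≤ 0 :=
      Real.cos_nonpos_of_pi_div_two_le_of_le (lb2 _ (by linarith)) (ub2 _ (by linarith))
    nlinarith [mul_nonneg (neg_nonneg.2 h1) (neg_nonneg.2 h2)]

lemma dvd_zero_aux (S : ℕ) (hS : 2 ≤ S) (a b : Fin S) :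
    (S:ℤ) ∣ ((a:ℤ) - (b:ℤ)) ↔ a = b := by
  have ha := a.isLt; have hb := b.isLt
  constructor
  · rintro ⟨c, hc⟩
    have hA : ((a:ℤ)) < S := by exact_mod_cast ha
    have hB : ((b:ℤ)) < S := by exact_mod_cast hb
    have hA0 : (0:ℤ) ≤ (a:ℤ) := by positivity
    have hB0 : (0:ℤ) ≤ (b:ℤ) := by positivity
    have hc0 : c = 0 := by
      rcases lt_trichotomy c 0 with h | h | h
      · exfalso
        have h1 : c ≤ -1 := by omega
        have : (S:ℤ) * c ≤ S * (-1) := mul_le_mul_of_nonneg_left h1 (by positivity)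
        omega
      · exact h
      · exfalso
        have h1 : (1:ℤ) ≤ c := h
        have : (S:ℤ) * 1 ≤ S * c := mul_le_mul_of_nonneg_left h1 (by positivity)
        omega
    rw [hc0, mul_zero, sub_eq_zero] at hc
    exact Fin.ext (by exact_mod_cast hc)
  · rintro rfl; simp

lemma dvd_one_aux (S : ℕ) [NeZero S] (hS : 2 ≤ S) (a b : Fin S) :
    (S:ℤ) ∣ (1 + (a:ℤ) - (b:ℤ)) ↔ b = a + 1 := by
  have ha := a.isLt; have hb := b.isLt
  have hval : ((a + 1 : Fin S) : ℕ) = ((a:ℕ) + 1) % S := by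
    have h1 : 1 % S = 1 := Nat.mod_eq_of_lt (by omega)
    rw [Fin.val_add, Fin.val_one', h1]
  have hsplit : (a:ℕ) + 1 < S ∨ (a:ℕ) + 1 = S := by omega
  constructor
  · rintro ⟨c, hc⟩
    have hA : ((a:ℤ)) < S := by exact_mod_cast ha
    have hB : ((b:ℤ)) < S := by exact_mod_cast hb
    have hA0 : (0:ℤ) ≤ (a:ℤ) := by positivity
    have hB0 : (0:ℤ) ≤ (b:ℤ) := by positivity
    have hc01 : c = 0 ∨ c = 1 := by
      rcases lt_trichotomy c 0 with h | h | h
      · exfalso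
        have h1 : c ≤ -1 := by omega
        have : (S:ℤ) * c ≤ S * (-1) := mul_le_mul_of_nonneg_left h1 (by positivity)
        omega
      · left; exact h
      · rcases lt_or_ge c 2 with h2 | h2
        · right; omega
        · exfalso
          have : (S:ℤ) * 2 ≤ S * c := mul_le_mul_of_nonneg_left h2 (by positivity)
          omega
    apply Fin.ext
    rw [hval]
    rcases hc01 with rfl | rfl
    · simp only [mul_zero] at hc
      have hb' : (b:ℤ) = (a:ℤ) + 1 := by omega
      have hbn : (b:ℕ) = (a:ℕ) + 1 := by exact_mod_cast hb'
      rw [hbn, Nat.mod_eq_of_lt (by omega)]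
    · simp only [mul_one] at hc
      have hb' : (b:ℤ) + (S:ℤ) = (a:ℤ) + 1 := by omega
      have haS : (a:ℤ) + 1 = S := by omega
      have hb0 : (b:ℤ) = 0 := by omega
      have haSn : (a:ℕ) + 1 = S := by exact_mod_cast haS
      have hb0n : (b:ℕ) = 0 := by exact_mod_cast hb0
      rw [hb0n, haSn, Nat.mod_self]
  · rintro rfl
    have hvala : ((a + 1 : Fin S) : ℤ) = (((a:ℕ) + 1) % S : ℕ) := by exact_mod_cast hval
    rcases hsplit with h | h
    · rw [hvala, Nat.mod_eq_of_lt h]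
      exact ⟨0, by push_cast; ring⟩
    · rw [hvala, h, Nat.mod_self]
      refine ⟨1, ?_⟩
      push_cast
      omega

/-- Sharp spectral bound for the adjacency form of an odd cycle:
`∑ x_s x_{s+1} ≥ -cos(π/S) ∑ x_s²`. -/
lemma odd_cycle_inner (S : ℕ) [NeZero S] (hS : 2 ≤ S) (hodd : S % 2 = 1)
    (x : Fin S → ℝ) :
    -Real.cos (Real.pi / S) * ∑ s, x s ^ 2 ≤ ∑ s : Fin S, x s * x (s + 1) := by
  have hSR : (0:ℝ) < S := by positivity
  set ω : ℂ := Complex.exp (2 * Real.pi * Complex.I / S) with hω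
  have hω0 : ω ≠ 0 := Complex.exp_ne_zero _
  have hωz : ∀ n : ℤ, ω ^ n = Complex.exp (n * (2 * Real.pi * Complex.I / S)) := fun n => by
    rw [hω, ← Complex.exp_int_mul]
  have hconj : ∀ n : ℤ, (starRingEnd ℂ) (ω ^ n) = ω ^ (-n) := by
    intro n
    rw [hωz, hωz, ← Complex.exp_conj]
    congr 1
    simp [map_div₀, map_mul, Complex.conj_I, Complex.conj_ofReal, map_ofNat]
    ring
  set F : Fin S → ℂ := fun k => ∑ a : Fin S, (x a : ℂ) * ω ^ ((k:ℤ) * (a:ℤ)) with hF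
  have hFconj : ∀ k : Fin S, (starRingEnd ℂ) (F k)
      = ∑ b : Fin S, (x b : ℂ) * ω ^ (-((k:ℤ) * (b:ℤ))) := by
    intro k
    rw [hF, map_sum]
    exact Finset.sum_congr rfl fun b _ => by rw [map_mul, Complex.conj_ofReal, hconj]
  have calc1 : ∀ t : ℤ, ∑ k : Fin S, ω ^ (t * (k:ℤ)) * (F k * (starRingEnd ℂ) (F k))
      = ∑ a : Fin S, ∑ b : Fin S, ((x a * x b : ℝ) : ℂ) *
          (if (S:ℤ) ∣ (t + (a:ℤ) - (b:ℤ)) then (S:ℂ) else 0) := by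
    intro t
    have step : ∀ k : Fin S, ω ^ (t * (k:ℤ)) * (F k * (starRingEnd ℂ) (F k))
        = ∑ a : Fin S, ∑ b : Fin S, ((x a * x b : ℝ) : ℂ) *
            ω ^ ((k:ℤ) * (t + (a:ℤ) - (b:ℤ))) := by
      intro k
      rw [hFconj, hF, Finset.sum_mul_sum, Finset.mul_sum]
      refine Finset.sum_congr rfl fun a _ => ?_
      rw [Finset.mul_sum]
      refine Finset.sum_congr rfl fun b _ => ?_
      rw [show (k:ℤ) * (t + (a:ℤ) - (b:ℤ))
          = t * (k:ℤ) + ((k:ℤ) * (a:ℤ) + -((k:ℤ) * (b:ℤ))) by ring,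
        zpow_add₀ hω0, zpow_add₀ hω0]
      push_cast
      ring
    rw [Finset.sum_congr rfl fun k _ => step k]
    rw [Finset.sum_comm]
    refine Finset.sum_congr rfl fun a _ => ?_
    rw [Finset.sum_comm]
    refine Finset.sum_congr rfl fun b _ => ?_
    rw [← Finset.mul_sum, rootsum_aux S hS]
  -- Parseval (t = 0)
  have t0C : ∑ k : Fin S, (Complex.normSq (F k) : ℂ) = ((S * ∑ a, x a ^ 2 : ℝ) : ℂ) := by
    have h := calc1 0
    simp only [zero_mul, zpow_zero, one_mul] at h
    rw [Finset.sum_congr rfl fun k _ => (Complex.mul_conj (F k))] at h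
    rw [h]
    have : ∀ a : Fin S, ∑ b : Fin S, ((x a * x b : ℝ) : ℂ) *
        (if (S:ℤ) ∣ (0 + (a:ℤ) - (b:ℤ)) then (S:ℂ) else 0) = ((x a ^ 2 * S : ℝ) : ℂ) := by
      intro a
      rw [Finset.sum_eq_single a]
      · rw [if_pos (by rw [zero_add]; exact (dvd_zero_aux S hS a a).2 rfl)]
        push_cast; ring
      · intro b _ hba
        rw [if_neg, mul_zero]
        rw [zero_add]
        intro hdvd
        exact hba ((dvd_zero_aux S hS a b).1 hdvd).symm
      · intro h; exact absurd (Finset.mem_univ a) h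
    rw [Finset.sum_congr rfl fun a _ => this a]
    push_cast
    rw [← Finset.sum_mul]
    ring
  -- shifted sum (t = 1)
  have t1C : ∑ k : Fin S, ω ^ ((k:ℤ)) * (Complex.normSq (F k) : ℂ)
      = (((∑ a, x a * x (a + 1)) * S : ℝ) : ℂ) := by
    have h := calc1 1
    simp only [one_mul] at h
    rw [Finset.sum_congr rfl fun k _ => by rw [Complex.mul_conj (F k)]] at h
    rw [h]
    have : ∀ a : Fin S, ∑ b : Fin S, ((x a * x b : ℝ) : ℂ) *
        (if (S:ℤ) ∣ (1 + (a:ℤ) - (b:ℤ)) then (S:ℂ) else 0)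
        = ((x a * x (a+1) * S : ℝ) : ℂ) := by
      intro a
      rw [Finset.sum_eq_single (a + 1)]
      · rw [if_pos ((dvd_one_aux S hS a (a+1)).2 rfl)]
        push_cast; ring
      · intro b _ hba
        rw [if_neg, mul_zero]
        intro hdvd
        exact hba ((dvd_one_aux S hS a b).1 hdvd)
      · intro h; exact absurd (Finset.mem_univ (a+1)) h
    rw [Finset.sum_congr rfl fun a _ => this a]
    push_cast
    rw [← Finset.sum_mul]
  -- real versions
  have t0R : ∑ k : Fin S, Complex.normSq (F k) = S * ∑ a, x a ^ 2 := by
    have h : ((∑ k : Fin S, Complex.normSq (F k) : ℝ) : ℂ) = ((S * ∑ a, x a ^ 2 : ℝ) : ℂ) := by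
      rw [Complex.ofReal_sum]
      exact t0C
    exact_mod_cast h
  have t1R : ∑ k : Fin S, (ω ^ ((k:ℤ))).re * Complex.normSq (F k)
      = (∑ a, x a * x (a + 1)) * S := by
    have h := congrArg Complex.re t1C
    simp only [Complex.re_sum, Complex.mul_re, Complex.ofReal_re, Complex.ofReal_im,
      mul_zero, sub_zero] at h
    exact h
  -- coefficient nonnegativity
  have hre : ∀ k : Fin S, (ω ^ ((k:ℤ))).re = Real.cos (2 * Real.pi * (k:ℕ) / S) := by
    intro k
    rw [hωz]
    rw [show ((k:ℤ) : ℂ) * (2 * Real.pi * Complex.I / S)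
        = ((2 * Real.pi * (k:ℕ) / S : ℝ) : ℂ) * Complex.I by push_cast; ring]
    exact Complex.exp_ofReal_mul_I_re _
  have hcoef : ∀ k : Fin S, 0 ≤ Real.cos (Real.pi / S) + (ω ^ ((k:ℤ))).re := by
    intro k
    rw [hre k]
    exact trig_aux S (k:ℕ) hS hodd k.isLt
  have main : 0 ≤ ∑ k : Fin S,
      (Real.cos (Real.pi / S) + (ω ^ ((k:ℤ))).re) * Complex.normSq (F k) :=
    Finset.sum_nonneg fun k _ => mul_nonneg (hcoef k) (Complex.normSq_nonneg _)
  have expand : ∑ k : Fin S, (Real.cos (Real.pi / S) + (ω ^ ((k:ℤ))).re) * Complex.normSq (F k)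
      = Real.cos (Real.pi / S) * (S * ∑ a, x a ^ 2) + (∑ a, x a * x (a + 1)) * S := by
    rw [← t0R, ← t1R, Finset.mul_sum, ← Finset.sum_add_distrib]
    exact Finset.sum_congr rfl fun k _ => by ring
  rw [expand] at main
  have final : 0 ≤ Real.cos (Real.pi / S) * (∑ a, x a ^ 2) + (∑ a, x a * x (a + 1)) := by
    have hdiv : 0 ≤ (Real.cos (Real.pi / S) * (S * ∑ a, x a ^ 2)
        + (∑ a, x a * x (a + 1)) * S) / S := div_nonneg main (le_of_lt hSR)
    rw [show (Real.cos (Real.pi / S) * (S * ∑ a, x a ^ 2) + (∑ a, x a * x (a + 1)) * S)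
        = (Real.cos (Real.pi / S) * (∑ a, x a ^ 2) + (∑ a, x a * x (a + 1))) * S by ring,
      mul_div_cancel_right₀ _ (ne_of_gt hSR)] at hdiv
    exact hdiv
  linarith

/-- Scalar cyclic difference bound with the sharp constant. -/
lemma cycle_diff_bound (S : ℕ) [NeZero S] (hS : 2 ≤ S) (x : Fin S → ℝ) :
    ∑ s : Fin S, (x s - x (s+1))^2 ≤
      (if S % 2 = 0 then (4:ℝ)
        else 2 - 2*Real.cos (Real.pi * ((S:ℝ)-1)/S)) * ∑ s, x s^2 := by
  have hSR : (0:ℝ) < S := by positivity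
  have hre : ∑ s : Fin S, x (s+1)^2 = ∑ s, x s^2 :=
    Fintype.sum_equiv (Equiv.addRight (1 : Fin S)) _ _ (fun s => rfl)
  have hexp : ∑ s : Fin S, (x s - x (s+1))^2
      = 2 * ∑ s, x s^2 - 2 * ∑ s, x s * x (s+1) := by
    have h1 : ∀ s : Fin S, (x s - x (s+1))^2
        = (x s^2 + x (s+1)^2) - 2*(x s * x (s+1)) := fun s => by ring
    rw [Finset.sum_congr rfl fun s _ => h1 s, Finset.sum_sub_distrib,
      Finset.sum_add_distrib, hre, ← Finset.mul_sum]
    ring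
  by_cases hpar : S % 2 = 0
  · rw [if_pos hpar, hexp]
    have hplus : ∑ s : Fin S, (x s + x (s+1))^2
        = 2 * ∑ s, x s^2 + 2 * ∑ s, x s * x (s+1) := by
      have h1 : ∀ s : Fin S, (x s + x (s+1))^2
          = (x s^2 + x (s+1)^2) + 2*(x s * x (s+1)) := fun s => by ring
      rw [Finset.sum_congr rfl fun s _ => h1 s, Finset.sum_add_distrib,
        Finset.sum_add_distrib, hre, ← Finset.mul_sum]
      ring
    have h0 : 0 ≤ ∑ s : Fin S, (x s + x (s+1))^2 :=
      Finset.sum_nonneg fun s _ => sq_nonneg _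
    rw [hplus] at h0
    linarith
  · have hodd : S % 2 = 1 := by omega
    rw [if_neg hpar, hexp]
    have hcos : Real.cos (Real.pi * ((S:ℝ)-1)/S) = -Real.cos (Real.pi/S) := by
      rw [show Real.pi * ((S:ℝ)-1)/S = Real.pi - Real.pi/S by field_simp]
      exact Real.cos_pi_sub _
    rw [hcos]
    have h := odd_cycle_inner S hS hodd x
    linarith

/-- for the cyclic nearest-neighbor coupling (coupling `u_s` with
`u_{(s mod S)+1}`) with constant parameter `ρ ≥ 0`, the corresponding block operator `B`
has spectral norm at most `(‖A‖²/S + αρ)^{1/2}`, where `α = 4` if `S` is even and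
`α = 2 − 2cos(π(S−1)/S)` if `S` is odd; i.e. for every tuple `u`,
`Σ_s (1/S)‖Au_s‖² + ρ Σ_s ‖u_s − u_{s+1}‖² ≤ (‖A‖²/S + αρ) Σ_s ‖u_s‖²`
(indices understood cyclically). -/
theorem block_operator_norm_bound_cyclic_coupling (N m S : ℕ) [NeZero S]
    (hN : 1 ≤ N) (hm : 1 ≤ m) (hS : 2 ≤ S)
    (A : EuclideanSpace ℝ (Fin N) →L[ℝ] EuclideanSpace ℝ (Fin m))
    (ρ : ℝ) (hρ : 0 ≤ ρ)
    (u : Fin S → EuclideanSpace ℝ (Fin N)) :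
    (∑ s, (1 / (S : ℝ)) * ‖A (u s)‖ ^ 2) +
        ρ * ∑ s, ‖u s - u (s + 1)‖ ^ 2 ≤
      (‖A‖ ^ 2 / (S : ℝ) +
          (if S % 2 = 0 then (4 : ℝ)
            else 2 - 2 * Real.cos (Real.pi * ((S : ℝ) - 1) / (S : ℝ))) * ρ) *
        ∑ s, ‖u s‖ ^ 2 := by
  have hSR : (0:ℝ) < S := by positivity
  set α : ℝ := if S % 2 = 0 then (4 : ℝ)
      else 2 - 2 * Real.cos (Real.pi * ((S : ℝ) - 1) / (S : ℝ)) with hα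
  have hnorm : ∀ v : EuclideanSpace ℝ (Fin N), ‖v‖^2 = ∑ i, (v i)^2 := by
    intro v
    rw [EuclideanSpace.norm_eq, Real.sq_sqrt (by positivity)]
    exact Finset.sum_congr rfl fun i _ => by rw [Real.norm_eq_abs, sq_abs]
  -- Part 1:
  have part1 : ∑ s, (1 / (S : ℝ)) * ‖A (u s)‖ ^ 2 ≤ ‖A‖^2 / S * ∑ s, ‖u s‖^2 := by
    calc ∑ s, (1 / (S : ℝ)) * ‖A (u s)‖ ^ 2
        ≤ ∑ s : Fin S, (1 / (S : ℝ)) * (‖A‖^2 * ‖u s‖^2) := by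
          refine Finset.sum_le_sum fun s _ => ?_
          apply mul_le_mul_of_nonneg_left _ (by positivity)
          have h := A.le_opNorm (u s)
          calc ‖A (u s)‖^2 ≤ (‖A‖ * ‖u s‖)^2 :=
                pow_le_pow_left₀ (norm_nonneg _) h 2
            _ = ‖A‖^2 * ‖u s‖^2 := by ring
      _ = ‖A‖^2 / S * ∑ s, ‖u s‖^2 := by
          rw [Finset.mul_sum]
          exact Finset.sum_congr rfl fun s _ => by ring
  -- Part 2:
  have part2 : ∑ s, ‖u s - u (s+1)‖^2 ≤ α * ∑ s, ‖u s‖^2 := by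
    have hsub : ∀ (s : Fin S) (i : Fin N), (u s - u (s+1)) i = u s i - u (s+1) i :=
      fun s i => rfl
    calc ∑ s, ‖u s - u (s+1)‖^2
        = ∑ s : Fin S, ∑ i : Fin N, (u s i - u (s+1) i)^2 := by
          refine Finset.sum_congr rfl fun s _ => ?_
          rw [hnorm]
          exact Finset.sum_congr rfl fun i _ => by rw [hsub]
      _ = ∑ i : Fin N, ∑ s : Fin S, (u s i - u (s+1) i)^2 := Finset.sum_comm
      _ ≤ ∑ i : Fin N, α * ∑ s : Fin S, (u s i)^2 := by
          refine Finset.sum_le_sum fun i _ => ?_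
          exact cycle_diff_bound S hS (fun s => u s i)
      _ = α * ∑ s : Fin S, ∑ i : Fin N, (u s i)^2 := by
          rw [← Finset.mul_sum, Finset.sum_comm]
      _ = α * ∑ s, ‖u s‖^2 := by
          congr 1
          exact Finset.sum_congr rfl fun s _ => (hnorm (u s)).symm
  calc (∑ s, (1 / (S : ℝ)) * ‖A (u s)‖ ^ 2) + ρ * ∑ s, ‖u s - u (s + 1)‖ ^ 2
      ≤ ‖A‖^2 / S * ∑ s, ‖u s‖^2 + ρ * (α * ∑ s, ‖u s‖^2) :=
        add_le_add part1 (mul_le_mul_of_nonneg_left part2 hρ)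
    _ = (‖A‖ ^ 2 / (S : ℝ) + α * ρ) * ∑ s, ‖u s‖ ^ 2 := by ring
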